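/- Let E : ℝ → ℝ be smooth and positive and let l, n : ℝ² → ℝ⁴ be smooth maps (E viewed as a function of u only) with ⟨l,l⟩ = 1, ⟨l_u,l_u⟩ = ⟨l_v,l_v⟩ = E(u), ⟨l_u,l_v⟩ = 0, ⟨n,n⟩ = 1, ⟨n,l⟩ = ⟨n,l_u⟩ = ⟨n,l_v⟩ = 0, satisfying the derivative formulas of a generalized torus of first type: l_{uu} = (E'/2E)·l_u − E·l, l_{uv} = (E'/2E)·l_v + n, l_{vv} = −(E'/2E)·l_u − E·l, n_u = −(1/E)·l_v, n_v = −(1/E)·l_u. Then for every v₀ ∈ ℝ the image of the curve u ↦ l(u, v₀) is contained in the intersection of S³ with a 2-dimensional linear subspace of ℝ⁴, i.e. each u-parameter line is a great circle. -/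

import Mathlib

open Real
open scoped InnerProductSpace

noncomputable section

/-- ℝ⁴ with the standard Euclidean inner product. -/
abbrev E4 := EuclideanSpace ℝ (Fin 4)

/-- Partial derivative with respect to the first parameter. -/
def pu {F : Type*} [NormedAddCommGroup F] [NormedSpace ℝ F]
    (f : ℝ × ℝ → F) (p : ℝ × ℝ) : F := fderiv ℝ f p (1, 0)

/-- Partial derivative with respect to the second parameter. -/
def pv {F : Type*} [NormedAddCommGroup F] [NormedSpace ℝ F]
    (f : ℝ × ℝ → F) (p : ℝ × ℝ) : F := fderiv ℝ f p (0, 1)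

/-- The derivative of a slice `u ↦ f (u, v)` is the partial derivative `pu f`. -/
lemma hasDerivAt_slice {F : Type*} [NormedAddCommGroup F] [NormedSpace ℝ F]
    {f : ℝ × ℝ → F} {u v : ℝ} (hf : DifferentiableAt ℝ f (u, v)) :
    HasDerivAt (fun t => f (t, v)) (pu f (u, v)) u := by
  have h1 : HasDerivAt (fun t : ℝ => (t, v)) ((1:ℝ), (0:ℝ)) u :=
    (hasDerivAt_id u).prodMk (hasDerivAt_const u v)
  exact hf.hasFDerivAt.comp_hasDerivAt u h1

/-- The span of two orthogonal nonzero vectors has dimension 2. -/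
lemma span_pair_finrank (x y : E4) (hx : ⟪x, x⟫_ℝ = 1) (hy : ⟪y, y⟫_ℝ ≠ 0)
    (hxy : ⟪x, y⟫_ℝ = 0) :
    Module.finrank ℝ (Submodule.span ℝ ({x, y} : Set E4)) = 2 := by
  have hli : LinearIndependent ℝ ![x, y] := by
    rw [LinearIndependent.pair_iff]
    intro s t hst
    have h1 : ⟪x, s • x + t • y⟫_ℝ = 0 := by rw [hst]; simp
    have h2 : ⟪y, s • x + t • y⟫_ℝ = 0 := by rw [hst]; simp
    rw [inner_add_right, inner_smul_right, inner_smul_right, hx, hxy] at h1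
    rw [inner_add_right, inner_smul_right, inner_smul_right, real_inner_comm, hxy] at h2
    have hs : s = 0 := by linarith
    refine ⟨hs, ?_⟩
    rw [hs] at h2
    simp only [zero_mul, zero_add] at h2
    exact (mul_eq_zero.mp h2).resolve_right hy
  have h : ({x, y} : Set E4) = Set.range ![x, y] := by
    simp [Matrix.range_cons, Matrix.range_empty, Set.insert_comm]
    exact Set.pair_comm x y
  rw [h, finrank_span_eq_card hli]
  simp

/-- for a generalized torus of first type (derivative formulas with `E = E(u)`),
every `u`-parameter line is a great circle: its image lies in the intersection of `S³` with
a 2-dimensional linear subspace of `ℝ⁴`. -/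
theorem stmt_9 (E : ℝ → ℝ) (l n : ℝ × ℝ → E4)
    (hE : ContDiff ℝ (⊤ : ℕ∞) E) (hEpos : ∀ u, 0 < E u)
    (hl : ContDiff ℝ (⊤ : ℕ∞) l) (hn : ContDiff ℝ (⊤ : ℕ∞) n)
    (hunit : ∀ p, ⟪l p, l p⟫_ℝ = 1)
    (hEu : ∀ p : ℝ × ℝ, ⟪pu l p, pu l p⟫_ℝ = E p.1)
    (hEv : ∀ p : ℝ × ℝ, ⟪pv l p, pv l p⟫_ℝ = E p.1)
    (hF : ∀ p, ⟪pu l p, pv l p⟫_ℝ = 0)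
    (hn1 : ∀ p, ⟪n p, n p⟫_ℝ = 1)
    (hnl : ∀ p, ⟪n p, l p⟫_ℝ = 0)
    (hnu : ∀ p, ⟪n p, pu l p⟫_ℝ = 0)
    (hnv : ∀ p, ⟪n p, pv l p⟫_ℝ = 0)
    (huu : ∀ p : ℝ × ℝ, pu (pu l) p =
      (deriv E p.1 / (2 * E p.1)) • pu l p - E p.1 • l p)
    (huv : ∀ p : ℝ × ℝ, pv (pu l) p =
      (deriv E p.1 / (2 * E p.1)) • pv l p + n p)
    (hvv : ∀ p : ℝ × ℝ, pv (pv l) p =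
      -((deriv E p.1 / (2 * E p.1)) • pu l p) - E p.1 • l p)
    (hnu' : ∀ p : ℝ × ℝ, pu n p = -((1 / E p.1) • pv l p))
    (hnv' : ∀ p : ℝ × ℝ, pv n p = -((1 / E p.1) • pu l p)) :
    ∀ v₀ : ℝ, ∃ W : Submodule ℝ E4, Module.finrank ℝ W = 2 ∧
      ∀ u : ℝ, l (u, v₀) ∈ W ∧ ‖l (u, v₀)‖ = 1 := by
  intro v₀
  have hEne : ∀ t, E t ≠ 0 := fun t => (hEpos t).ne'
  have hld : Differentiable ℝ l := hl.differentiable (by simp)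
  have hpuld : Differentiable ℝ (pu l) :=
    ((hl.fderiv_right (m := (⊤:ℕ∞)) (by norm_cast)).clm_apply contDiff_const).differentiable (by simp)
  -- derivatives along the u-line
  have hc : ∀ u : ℝ, HasDerivAt (fun t => l (t, v₀)) (pu l (u, v₀)) u :=
    fun u => hasDerivAt_slice (hld _)
  have hc' : ∀ u : ℝ, HasDerivAt (fun t => pu l (t, v₀)) (pu (pu l) (u, v₀)) u :=
    fun u => hasDerivAt_slice (hpuld _)
  -- l ⟂ l_u
  have hllu : ∀ u : ℝ, ⟪l (u, v₀), pu l (u, v₀)⟫_ℝ = 0 := by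
    intro u
    have h1 : HasDerivAt (fun t => ⟪l (t, v₀), l (t, v₀)⟫_ℝ)
        (⟪l (u, v₀), pu l (u, v₀)⟫_ℝ + ⟪pu l (u, v₀), l (u, v₀)⟫_ℝ) u :=
      (hc u).inner ℝ (hc u)
    have h2 : (fun t : ℝ => ⟪l (t, v₀), l (t, v₀)⟫_ℝ) = fun _ => (1:ℝ) := by
      funext t; exact hunit _
    rw [h2] at h1
    have h3 := h1.unique (hasDerivAt_const u 1)
    rw [real_inner_comm] at h3
    rw [real_inner_comm]
    linarith
  set W : Submodule ℝ E4 := Submodule.span ℝ ({l (0, v₀), pu l (0, v₀)} : Set E4) with hW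
  have hrank : Module.finrank ℝ W = 2 := by
    apply span_pair_finrank
    · exact hunit _
    · rw [hEu (0, v₀)]; exact hEne 0
    · exact hllu 0
  refine ⟨W, hrank, fun u => ⟨?_, ?_⟩⟩
  · -- membership via the double orthogonal complement
    have key : ∀ x ∈ Wᗮ, ⟪x, l (u, v₀)⟫_ℝ = 0 := by
      intro x hx
      rw [Submodule.mem_orthogonal] at hx
      have hx1 : ⟪x, l (0, v₀)⟫_ℝ = 0 := by
        rw [real_inner_comm]; exact hx _ (Submodule.subset_span (by simp))
      have hx2 : ⟪x, pu l (0, v₀)⟫_ℝ = 0 := by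
        rw [real_inner_comm]; exact hx _ (Submodule.subset_span (by simp))
      set g0 : ℝ → ℝ := fun t => ⟪x, l (t, v₀)⟫_ℝ with hg0def
      set g1 : ℝ → ℝ := fun t => ⟪x, pu l (t, v₀)⟫_ℝ with hg1def
      have hg0 : ∀ t, HasDerivAt g0 (g1 t) t := by
        intro t
        have := (hasDerivAt_const t x).inner ℝ (hc t)
        simpa using this
      have hg1 : ∀ t, HasDerivAt g1 (deriv E t / (2 * E t) * g1 t - E t * g0 t) t := by
        intro t
        have h := (hasDerivAt_const t x).inner ℝ (hc' t)
        have h2 : ⟪x, pu (pu l) (t, v₀)⟫_ℝ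
            = deriv E t / (2 * E t) * g1 t - E t * g0 t := by
          rw [huu (t, v₀)]
          simp [inner_sub_right, inner_smul_right, hg0def, hg1def]
        simpa [h2] using h
      set F : ℝ → ℝ := fun t => g1 t ^ 2 / E t + g0 t ^ 2 with hFdef
      have hFd : ∀ t, HasDerivAt F 0 t := by
        intro t
        have hEd : HasDerivAt E (deriv E t) t := (hE.differentiable (by simp) t).hasDerivAt
        have h := (((hg1 t).pow 2).div hEd (hEne t)).add ((hg0 t).pow 2)
        refine h.congr_deriv ?_
        have := hEne t
        simp only [Pi.pow_apply]; field_simp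
        ring
      have hFconst : ∀ t, F t = F 0 := fun t =>
        is_const_of_deriv_eq_zero (fun s => (hFd s).differentiableAt)
          (fun s => (hFd s).deriv) t 0
      have hF0 : F 0 = 0 := by
        simp only [hFdef, hg0def, hg1def]
        rw [hx1, hx2]
        simp
      have hFu : F u = 0 := by rw [hFconst u, hF0]
      have h1 : 0 ≤ g1 u ^ 2 / E u := div_nonneg (sq_nonneg _) (hEpos u).le
      have h2 : 0 ≤ g0 u ^ 2 := sq_nonneg _
      have hsq : g0 u ^ 2 = 0 := by
        simp only [hFdef] at hFu; linarith
      have : g0 u = 0 := by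
        exact pow_eq_zero_iff (by norm_num) |>.mp hsq
      simpa [hg0def] using this
    have hmem : l (u, v₀) ∈ Wᗮᗮ := by
      rw [Submodule.mem_orthogonal]
      intro x hx
      exact key x hx
    rwa [Submodule.orthogonal_orthogonal] at hmem
  · have h := hunit (u, v₀)
    rw [real_inner_self_eq_norm_sq] at h
    nlinarith [norm_nonneg (l (u, v₀))]
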